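/- Gauss's identity: for 0 < k ≤ 1, the arithmetic–geometric mean satisfies AG₂(1,k) = 1 / ₂F₁(1/2, 1/2; 1; 1−k²), where ₂F₁ is the Gauss hypergeometric function. -/

import Mathlib

open Finset Real

noncomputable def wc (n : ℕ) : ℝ := ∏ i ∈ Finset.range n, (2*(i:ℝ)+1)/(2*i+2)

lemma wc_zero : wc 0 = 1 := by simp [wc]

lemma wc_succ (n : ℕ) : wc (n+1) = wc n * ((2*n+1)/(2*n+2)) := by
  simp only [wc, Finset.prod_range_succ]

lemma wc_pos (n : ℕ) : 0 < wc n := by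
  apply Finset.prod_pos; intro i _; positivity

lemma wc_le_one (n : ℕ) : wc n ≤ 1 := by
  apply Finset.prod_le_one
  · intro i _; positivity
  · intro i _
    rw [div_le_one (by positivity)]
    linarith

lemma wc_rec (n : ℕ) : (2*(n:ℝ)+2) * wc (n+1) = (2*n+1) * wc n := by
  rw [wc_succ]; field_simp

lemma poch_half (n : ℕ) : (ascPochhammer ℝ n).eval (1/2 : ℝ) = wc n * n.factorial := by
  induction n with
  | zero => simp [wc_zero]
  | succ n ih =>
    rw [ascPochhammer_succ_eval, ih, wc_succ, Nat.factorial_succ]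
    push_cast
    field_simp
    ring

lemma summable_wc_pow {x : ℝ} (hx : |x| < 1) : Summable (fun n => wc n * x^n) := by
  apply Summable.of_norm
  apply Summable.of_nonneg_of_le (fun n => norm_nonneg _) (fun n => ?_)
    (summable_geometric_of_lt_one (abs_nonneg x) hx)
  rw [norm_mul, norm_pow]
  calc ‖wc n‖ * ‖x‖^n ≤ 1 * |x|^n := by
        apply mul_le_mul _ le_rfl (by positivity) zero_le_one
        rw [Real.norm_eq_abs, abs_of_pos (wc_pos n)]; exact wc_le_one n
    _ = |x|^n := one_mul _

noncomputable def wS (y : ℝ) : ℝ := ∑' n, wc n * y^n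

lemma summable_wD {y : ℝ} (hy : |y| < 1) :
    Summable (fun n => wc n * ((n:ℝ) * y^(n-1))) := by
  set r : ℝ := (|y|+1)/2 with hr
  have hyr : |y| < r := by rw [hr]; linarith
  have hr0 : 0 ≤ r := by positivity
  have hr1 : r < 1 := by rw [hr]; linarith
  have hsum : Summable (fun n : ℕ => (n:ℝ) * r^(n-1)) := by
    rw [← summable_nat_add_iff 1]
    have h1 : Summable (fun n : ℕ => (n:ℝ) * r^n) := by
      simpa using summable_pow_mul_geometric_of_norm_lt_one 1
        (by rwa [Real.norm_eq_abs, abs_of_nonneg hr0] : ‖r‖ < 1)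
    have h2 : Summable (fun n : ℕ => r^n) := summable_geometric_of_lt_one hr0 hr1
    apply (h1.add h2).congr
    intro n
    simp only [Nat.add_sub_cancel]
    push_cast
    ring
  apply Summable.of_norm
  apply Summable.of_nonneg_of_le (fun n => norm_nonneg _) (fun n => ?_) hsum
  rw [norm_mul, norm_mul, norm_pow, Real.norm_eq_abs, Real.norm_eq_abs,
    abs_of_pos (wc_pos n), Nat.abs_cast]
  calc wc n * ((n:ℝ) * |y|^(n-1)) ≤ 1 * ((n:ℝ) * r^(n-1)) := by
        apply mul_le_mul (wc_le_one n) _ (by positivity) zero_le_one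
        exact mul_le_mul_of_nonneg_left
          (pow_le_pow_left₀ (abs_nonneg y) hyr.le _) (Nat.cast_nonneg n)
    _ = (n:ℝ) * r^(n-1) := one_mul _

lemma hasDerivAt_wS {y : ℝ} (hy : |y| < 1) :
    HasDerivAt wS (∑' n, wc n * ((n:ℝ) * y^(n-1))) y := by
  set r : ℝ := (|y|+1)/2 with hr
  have hyr : |y| < r := by rw [hr]; linarith
  have hr0 : 0 < r := by positivity
  have hr1 : r < 1 := by rw [hr]; linarith
  have hsum : Summable (fun n : ℕ => (n:ℝ) * r^(n-1)) := by
    rw [← summable_nat_add_iff 1]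
    have h1 : Summable (fun n : ℕ => (n:ℝ) * r^n) := by
      simpa using summable_pow_mul_geometric_of_norm_lt_one 1
        (by rw [Real.norm_eq_abs, abs_of_nonneg hr0.le]; exact hr1 : ‖r‖ < 1)
    have h2 : Summable (fun n : ℕ => r^n) := summable_geometric_of_lt_one hr0.le hr1
    apply (h1.add h2).congr
    intro n
    simp only [Nat.add_sub_cancel]
    push_cast
    ring
  exact hasDerivAt_tsum_of_isPreconnected hsum (isOpen_Ioo (a := -r) (b := r))
    (isPreconnected_Ioo)
    (fun n z _ => (hasDerivAt_pow n z).const_mul (wc n))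
    (fun n z hz => by
      rw [Real.norm_eq_abs, abs_mul, abs_mul, abs_of_pos (wc_pos n), Nat.abs_cast, abs_pow]
      have hzr : |z| ≤ r := by
        rw [abs_le]; exact ⟨(Set.mem_Ioo.1 hz).1.le, (Set.mem_Ioo.1 hz).2.le⟩
      calc wc n * ((n:ℝ) * |z|^(n-1)) ≤ 1 * ((n:ℝ) * r^(n-1)) := by
            apply mul_le_mul (wc_le_one n) _ (by positivity) zero_le_one
            exact mul_le_mul_of_nonneg_left
              (pow_le_pow_left₀ (abs_nonneg z) hzr _) (Nat.cast_nonneg n)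
        _ = (n:ℝ) * r^(n-1) := one_mul _)
    (Set.mem_Ioo.2 ⟨by linarith, hr0⟩)
    (summable_wc_pow (x := 0) (by simp))
    (Set.mem_Ioo.2 ⟨neg_lt_of_abs_lt hyr, lt_of_abs_lt hyr⟩)

lemma wS_deriv_eq {y : ℝ} (hy : |y| < 1) :
    2 * (1 - y) * (∑' n, wc n * ((n:ℝ) * y^(n-1))) = wS y := by
  set D := ∑' n, wc n * ((n:ℝ) * y^(n-1)) with hD
  have hDsum : HasSum (fun n => wc n * ((n:ℝ) * y^(n-1))) D := (summable_wD hy).hasSum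
  have h2D : HasSum (fun n => 2 * (wc n * ((n:ℝ) * y^(n-1)))) (2*D) := hDsum.mul_left 2
  have hshift : HasSum (fun n => 2 * (wc (n+1) * (((n:ℕ)+1:ℝ) * y^n)))
      (2*D - ∑ i ∈ Finset.range 1, 2 * (wc i * ((i:ℝ) * y^(i-1)))) := by
    have := (hasSum_nat_add_iff' (f := fun n => 2 * (wc n * ((n:ℝ) * y^(n-1)))) 1).2 h2D
    apply this.congr_fun
    intro n
    push_cast
    norm_num
  have hshift' : HasSum (fun n : ℕ => (2*(n:ℝ)+1) * wc n * y^n) (2*D) := by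
    have h0 : (∑ i ∈ Finset.range 1, 2 * (wc i * ((i:ℝ) * y^(i-1)))) = 0 := by simp
    rw [h0, sub_zero] at hshift
    apply hshift.congr_fun
    intro n
    push_cast
    linear_combination (-(y^n : ℝ)) * wc_rec n
  have hyD : HasSum (fun n : ℕ => 2*(n:ℝ) * wc n * y^n) (2*y*D) := by
    have := (hDsum.mul_left (2*y))
    apply this.congr_fun
    intro n
    cases n with
    | zero => simp
    | succ m =>
      simp only [Nat.add_sub_cancel]
      push_cast
      ring
  have hsub : HasSum (fun n => wc n * y^n) (2*D - 2*y*D) := by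
    have := hshift'.sub hyD
    apply this.congr_fun
    intro n
    ring
  have heq := hsub.tsum_eq
  show 2 * (1-y) * D = ∑' n, wc n * y^n
  rw [heq]
  ring

lemma wS_eq_inv_sqrt {x : ℝ} (h0 : 0 ≤ x) (h1 : x < 1) :
    wS x = (Real.sqrt (1-x))⁻¹ := by
  have hkey : wS x ^ 2 * (1 - x) = 1 := by
    rcases eq_or_lt_of_le h0 with h | h
    · have : wS 0 = 1 := by
        rw [wS, tsum_eq_single 0 (fun n hn => by
          cases n with
          | zero => simp at hn
          | succ m => simp)]
        simp [wc_zero]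
      rw [← h, this]; ring
    · -- MVT on [0, x]
      have hderiv : ∀ y ∈ Set.Icc (0:ℝ) x, HasDerivAt (fun z => wS z ^ 2 * (1 - z)) 0 y := by
        intro y hy
        have hy1 : |y| < 1 := by
          rw [abs_lt]; constructor <;> [linarith [hy.1]; linarith [hy.2]]
        have hS := hasDerivAt_wS hy1
        set D := ∑' n, wc n * ((n:ℝ) * y^(n-1)) with hDdef
        have hid : 2 * (1 - y) * D = wS y := wS_deriv_eq hy1
        have h2 : HasDerivAt (fun z => wS z ^ 2) (2 * wS y ^ 1 * D) y := hS.pow 2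
        have h3 : HasDerivAt (fun z => (1:ℝ) - z) (-1) y := by
          simpa using (hasDerivAt_id y).const_sub 1
        have := h2.mul h3
        exact this.congr_deriv (by linear_combination (wS y) * hid)
      obtain ⟨cpt, hcpt, hslope⟩ := exists_hasDerivAt_eq_slope
        (fun z => wS z ^ 2 * (1 - z)) (fun _ => 0) h
        (fun y hy => ((hderiv y hy).continuousAt).continuousWithinAt)
        (fun y hy => hderiv y (Set.mem_Icc.2 ⟨hy.1.le, hy.2.le⟩))
      have hS0 : wS 0 = 1 := by
        rw [wS, tsum_eq_single 0 (fun n hn => by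
          cases n with
          | zero => simp at hn
          | succ m => simp)]
        simp [wc_zero]
      have : (wS x ^ 2 * (1-x) - wS 0 ^ 2 * (1-0)) / (x - 0) = 0 := hslope.symm
      have hx0 : x - 0 ≠ 0 := by simp [h.ne']
      field_simp at this
      rw [hS0] at this
      nlinarith [this]
  have hSnn : 0 ≤ wS x := tsum_nonneg (fun n => mul_nonneg (wc_pos n).le (pow_nonneg h0 n))
  have h1x : (0:ℝ) < 1 - x := by linarith
  have : wS x = Real.sqrt (wS x ^ 2) := (Real.sqrt_sq hSnn).symm
  rw [this]
  have : wS x ^ 2 = (1-x)⁻¹ := by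
    field_simp
    linarith [hkey]
  rw [this, ← Real.sqrt_inv]

theorem hasSum_binomial {x : ℝ} (h0 : 0 ≤ x) (h1 : x < 1) :
    HasSum (fun n => wc n * x^n) ((Real.sqrt (1-x))⁻¹) := by
  have := (summable_wc_pow (x := x) (by rw [abs_of_nonneg h0]; exact h1)).hasSum
  rwa [show (∑' n, wc n * x^n) = (Real.sqrt (1-x))⁻¹ from wS_eq_inv_sqrt h0 h1] at this

open MeasureTheory Set

noncomputable def Jf (p q t : ℝ) : ℝ := (Real.sqrt ((t^2+p^2)*(t^2+q^2)))⁻¹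

noncomputable def Jint (p q : ℝ) : ℝ := ∫ t in Set.Ioi (0:ℝ), Jf p q t

lemma Jf_denom_pos {p q : ℝ} (hp : 0 < p) (hq : 0 < q) (t : ℝ) :
    0 < (t^2+p^2)*(t^2+q^2) := by positivity

lemma Jf_pos {p q : ℝ} (hp : 0 < p) (hq : 0 < q) (t : ℝ) : 0 < Jf p q t := by
  unfold Jf
  have := Jf_denom_pos hp hq t
  positivity

lemma Jf_cont {p q : ℝ} (hp : 0 < p) (hq : 0 < q) : Continuous (Jf p q) := by
  unfold Jf
  apply Continuous.inv₀
  · fun_prop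
  · intro t
    exact Real.sqrt_ne_zero'.2 (Jf_denom_pos hp hq t)

lemma Jf_le {p q : ℝ} (hp : 0 < p) (hq : 0 < q) (t : ℝ) :
    Jf p q t ≤ (t^2 + (min p q)^2)⁻¹ := by
  have hm : 0 < min p q := lt_min hp hq
  have h1 : (t^2 + (min p q)^2) ≤ Real.sqrt ((t^2+p^2)*(t^2+q^2)) := by
    rw [show (t^2 + (min p q)^2) = Real.sqrt ((t^2 + (min p q)^2)^2) from
      (Real.sqrt_sq (by positivity)).symm]
    apply Real.sqrt_le_sqrt
    have h2 : (min p q)^2 ≤ p^2 := pow_le_pow_left₀ hm.le (min_le_left p q) 2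
    have h3 : (min p q)^2 ≤ q^2 := pow_le_pow_left₀ hm.le (min_le_right p q) 2
    nlinarith [sq_nonneg t, mul_le_mul h2 h3 (by positivity) (by positivity)]
  unfold Jf
  exact inv_anti₀ (by positivity) h1

lemma integrable_Jf {p q : ℝ} (hp : 0 < p) (hq : 0 < q) : Integrable (Jf p q) := by
  set m := min p q with hm
  have hm0 : 0 < m := lt_min hp hq
  have hbound : Integrable (fun t : ℝ => (1 + 1/m^2) * (1+t^2)⁻¹) :=
    integrable_inv_one_add_sq.const_mul _
  apply hbound.mono ((Jf_cont hp hq).aestronglyMeasurable)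
  filter_upwards with t
  rw [Real.norm_eq_abs, Real.norm_eq_abs, abs_of_pos (Jf_pos hp hq t), abs_of_pos (by positivity)]
  calc Jf p q t ≤ (t^2 + m^2)⁻¹ := Jf_le hp hq t
    _ ≤ (1 + 1/m^2) * (1+t^2)⁻¹ := by
        rw [inv_eq_one_div, inv_eq_one_div, mul_one_div,
          div_le_div_iff₀ (by positivity) (by positivity)]
        have h4 : 0 ≤ t^2/m^2 := by positivity
        have h5 : (1 + 1/m^2) * (t^2+m^2) = t^2 + m^2 + t^2/m^2 + 1 := by
          field_simp; ring
        nlinarith [sq_nonneg t, sq_nonneg m]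

lemma integrableOn_Jf {p q : ℝ} (hp : 0 < p) (hq : 0 < q) :
    IntegrableOn (Jf p q) (Set.Ioi 0) := (integrable_Jf hp hq).integrableOn

lemma Jint_symm (p q : ℝ) : Jint p q = Jint q p := by
  unfold Jint Jf
  congr 1
  ext t
  rw [mul_comm]

lemma Jint_mono_right {p q q' : ℝ} (hp : 0 < p) (hq : 0 < q) (hqq' : q ≤ q') :
    Jint p q' ≤ Jint p q := by
  have hq' : 0 < q' := lt_of_lt_of_le hq hqq'
  apply setIntegral_mono_on (integrableOn_Jf hp hq') (integrableOn_Jf hp hq) measurableSet_Ioi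
  intro t _
  unfold Jf
  apply inv_anti₀
  · exact Real.sqrt_pos.2 (Jf_denom_pos hp hq t)
  · apply Real.sqrt_le_sqrt
    have h2 : q^2 ≤ q'^2 := pow_le_pow_left₀ hq.le hqq' 2
    nlinarith [mul_nonneg (by positivity : (0:ℝ) ≤ t^2+p^2) (by linarith : (0:ℝ) ≤ q'^2 - q^2)]

lemma Jint_diag {c : ℝ} (hc : 0 < c) : Jint c c = π / (2*c) := by
  have h1 : ∀ t : ℝ, Jf c c t = (t^2+c^2)⁻¹ := by
    intro t
    unfold Jf
    rw [show (t^2+c^2)*(t^2+c^2) = (t^2+c^2)^2 by ring, Real.sqrt_sq (by positivity)]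
  have himg : (fun u : ℝ => c * u) '' (Set.Ioi 0) = Set.Ioi 0 := by
    ext x
    constructor
    · rintro ⟨u, hu, rfl⟩
      exact mul_pos hc hu
    · intro hx
      exact ⟨x / c, div_pos hx hc, by field_simp⟩
  have hder : ∀ u ∈ Set.Ioi (0:ℝ), HasDerivWithinAt (fun u : ℝ => c * u) c (Set.Ioi 0) u := by
    intro u _
    simpa using ((hasDerivAt_id u).const_mul c).hasDerivWithinAt
  have hinj : Set.InjOn (fun u : ℝ => c * u) (Set.Ioi 0) := by
    intro u _ v _ h
    exact mul_left_cancel₀ hc.ne' h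
  have := integral_image_eq_integral_abs_deriv_smul measurableSet_Ioi hder hinj
    (fun t => (t^2+c^2)⁻¹)
  rw [himg] at this
  unfold Jint
  rw [show (∫ t in Set.Ioi (0:ℝ), Jf c c t) = ∫ t in Set.Ioi (0:ℝ), (t^2+c^2)⁻¹ by
    congr 1; ext t; rw [h1], this]
  have h2 : ∀ u : ℝ, |c| • ((c*u)^2+c^2)⁻¹ = c⁻¹ * (1+u^2)⁻¹ := by
    intro u
    rw [smul_eq_mul, abs_of_pos hc]
    rw [show (c*u)^2+c^2 = c^2 * (1+u^2) by ring]
    rw [mul_inv]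
    rw [show c * ((c^2)⁻¹ * (1+u^2)⁻¹) = (c * (c^2)⁻¹) * (1+u^2)⁻¹ by ring]
    congr 1
    field_simp
  rw [show (∫ u in Set.Ioi (0:ℝ), |c| • ((c*u)^2+c^2)⁻¹) =
      ∫ u in Set.Ioi (0:ℝ), c⁻¹ * (1+u^2)⁻¹ by congr 1; ext u; rw [h2]]
  rw [integral_const_mul, integral_Ioi_inv_one_add_sq]
  rw [Real.arctan_zero, sub_zero, inv_mul_eq_div, div_div]

lemma Jint_inv {p q : ℝ} (hp : 0 < p) (hq : 0 < q) :
    Jint ((p+q)/2) (Real.sqrt (p*q)) = Jint p q := by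
  set A := (p+q)/2 with hA
  set B := Real.sqrt (p*q) with hB
  have hA0 : 0 < A := by rw [hA]; linarith
  have hB0 : 0 < B := Real.sqrt_pos.2 (mul_pos hp hq)
  have hB2 : B^2 = p*q := Real.sq_sqrt (mul_pos hp hq).le
  have hint : Integrable (Jf A B) := integrable_Jf hA0 hB0
  -- even function: full integral is twice the half integral
  have heven : (∫ t : ℝ, Jf A B t) = 2 * Jint A B := by
    have hsplit := intervalIntegral.integral_Iic_add_Ioi (b := (0:ℝ)) hint.integrableOn hint.integrableOn
    have hneg : (∫ t in Set.Ioi (0:ℝ), Jf A B (-t)) = ∫ t in Set.Iic (-(0:ℝ)), Jf A B t :=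
      integral_comp_neg_Ioi 0 (Jf A B)
    rw [neg_zero] at hneg
    have heq : (∫ t in Set.Ioi (0:ℝ), Jf A B (-t)) = ∫ t in Set.Ioi (0:ℝ), Jf A B t := by
      congr 1; ext t; unfold Jf; rw [neg_pow, neg_one_sq, one_mul]
    rw [← hsplit, ← hneg, heq]
    unfold Jint
    ring
  -- the substitution
  set φ : ℝ → ℝ := fun t => (t - p*q/t)/2 with hφ
  set φ' : ℝ → ℝ := fun t => (1 + p*q/t^2)/2 with hφ'
  have himg : φ '' (Set.Ioi 0) = Set.univ := by
    apply Set.eq_univ_of_forall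
    intro u
    set s := Real.sqrt (u^2 + p*q) with hs
    have hs2 : s^2 = u^2 + p*q := Real.sq_sqrt (by positivity)
    have hsu : |u| < s := by
      rw [hs, ← Real.sqrt_sq_eq_abs]
      exact Real.sqrt_lt_sqrt (sq_nonneg u) (by nlinarith [mul_pos hp hq])
    have ht0 : 0 < u + s := by
      rcases abs_lt.1 hsu with ⟨h1, _⟩
      linarith
    refine ⟨u + s, ht0, ?_⟩
    show ((u+s) - p*q/(u+s))/2 = u
    have h : (u+s)^2 = 2*u*(u+s) + p*q := by nlinarith [hs2]
    field_simp
    nlinarith [h]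
  have hder : ∀ t ∈ Set.Ioi (0:ℝ), HasDerivWithinAt φ (φ' t) (Set.Ioi 0) t := by
    intro t ht
    have ht0 : t ≠ 0 := (Set.mem_Ioi.1 ht).ne'
    have hinv : HasDerivAt (fun t : ℝ => p*q/t) ((p*q) * (-(t^2)⁻¹)) t := by
      simpa [div_eq_mul_inv] using (hasDerivAt_inv ht0).const_mul (p*q)
    have h1 : HasDerivAt (fun t : ℝ => (t - p*q/t)/2) ((1 - (p*q) * (-(t^2)⁻¹))/2) t :=
      ((hasDerivAt_id t).sub hinv).div_const 2
    have h2 : ((1 - (p*q) * (-(t^2)⁻¹))/2) = φ' t := by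
      show _ = (1 + p*q/t^2)/2
      rw [mul_neg, sub_neg_eq_add, div_eq_mul_inv (p*q)]
    rw [← h2]
    exact h1.hasDerivWithinAt
  have hinj : Set.InjOn φ (Set.Ioi 0) := by
    apply StrictMonoOn.injOn
    intro u hu v hv huv
    have hu0 : (0:ℝ) < u := hu
    have hv0 : (0:ℝ) < v := hv
    have : p*q/v < p*q/u := div_lt_div_of_pos_left (mul_pos hp hq) hu0 huv
    show (u - p*q/u)/2 < (v - p*q/v)/2
    linarith
  have key : ∀ t ∈ Set.Ioi (0:ℝ), |φ' t| • Jf A B (φ t) = 2 * Jf p q t := by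
    intro t ht
    have ht0 : (0:ℝ) < t := ht
    have htne : t ≠ 0 := ht0.ne'
    set D := (t^2+p^2)*(t^2+q^2) with hD
    have hD0 : 0 < D := Jf_denom_pos hp hq t
    have hpq0 : 0 < t^2 + p*q := by positivity
    have hD1 : ((φ t)^2 + A^2) * ((φ t)^2 + B^2) = D * ((t^2+p*q)/(4*t^2))^2 := by
      show (((t - p*q/t)/2)^2 + ((p+q)/2)^2) * (((t - p*q/t)/2)^2 + B^2)
        = D * ((t^2+p*q)/(4*t^2))^2
      rw [hB2, hD]
      field_simp
      ring
    have hsqrt : Real.sqrt (((φ t)^2 + A^2) * ((φ t)^2 + B^2))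
        = Real.sqrt D * ((t^2+p*q)/(4*t^2)) := by
      rw [hD1]
      rw [Real.sqrt_mul hD0.le, Real.sqrt_sq (by positivity)]
    have hφ'val : |φ' t| = (t^2+p*q)/(2*t^2) := by
      show |(1 + p*q/t^2)/2| = (t^2+p*q)/(2*t^2)
      rw [abs_of_pos (by positivity)]
      rw [show (1 + p*q/t^2) = (t^2+p*q)/t^2 by field_simp, div_div]
      ring_nf
    unfold Jf
    rw [smul_eq_mul, hsqrt, hφ'val, mul_inv]
    have hsD : Real.sqrt D ≠ 0 := (Real.sqrt_pos.2 hD0).ne'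
    have hfac : ((t^2+p*q)/(2*t^2)) * (((t^2+p*q)/(4*t^2)))⁻¹ = 2 := by
      rw [inv_div]
      field_simp
      ring
    linear_combination ((Real.sqrt D)⁻¹) * hfac
  have hchange := integral_image_eq_integral_abs_deriv_smul measurableSet_Ioi hder hinj (Jf A B)
  rw [himg] at hchange
  rw [setIntegral_univ] at hchange
  have hright : (∫ t in Set.Ioi (0:ℝ), |φ' t| • Jf A B (φ t))
      = ∫ t in Set.Ioi (0:ℝ), 2 * Jf p q t := setIntegral_congr_fun measurableSet_Ioi key
  rw [hright, integral_const_mul] at hchange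
  rw [heven] at hchange
  have : Jint A B = Jint p q := by
    unfold Jint at *
    linarith
  exact this

lemma integral_cos_even (n : ℕ) :
    ∫ x in (0:ℝ)..(π/2), Real.cos x ^ (2*n) = (π/2) * wc n := by
  induction n with
  | zero => simp [wc_zero]
  | succ n ih =>
    have h := integral_cos_pow (a := (0:ℝ)) (b := π/2) (n := 2*n)
    rw [show 2*n+2 = 2*(n+1) from by ring] at h
    rw [h, ih, Real.cos_pi_div_two, Real.sin_zero, wc_succ]
    push_cast
    rw [zero_pow (by omega), Real.cos_zero]
    ring

lemma Jint_one_trig {k : ℝ} (hk : 0 < k) :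
    Jint 1 k = ∫ θ in Set.Ioo 0 (π/2), (Real.sqrt (1 - (1-k^2) * Real.cos θ^2))⁻¹ := by
  set x := 1 - k^2 with hx
  have himg : Real.arctan '' (Set.Ioi 0) = Set.Ioo 0 (π/2) := by
    ext θ
    constructor
    · rintro ⟨t, ht, rfl⟩
      refine ⟨?_, Real.arctan_lt_pi_div_two t⟩
      rw [← Real.arctan_zero]
      exact Real.arctan_strictMono ht
    · rintro ⟨h1, h2⟩
      refine ⟨Real.tan θ, Real.tan_pos_of_pos_of_lt_pi_div_two h1 h2, ?_⟩
      exact Real.arctan_tan (by linarith [Real.pi_pos]) h2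
  have hder : ∀ t ∈ Set.Ioi (0:ℝ),
      HasDerivWithinAt Real.arctan ((1+t^2)⁻¹) (Set.Ioi 0) t := by
    intro t _
    exact (Real.hasDerivAt_arctan' t).hasDerivWithinAt
  have hinj : Set.InjOn Real.arctan (Set.Ioi 0) := by
    intro u _ v _ h
    exact Real.arctan_injective h
  have hchange := integral_image_eq_integral_abs_deriv_smul measurableSet_Ioi hder hinj
    (fun θ => (Real.sqrt (1 - x * Real.cos θ^2))⁻¹)
  rw [himg] at hchange
  rw [hchange]
  unfold Jint
  apply (setIntegral_congr_fun measurableSet_Ioi _).symm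
  intro t _
  show |(1+t^2)⁻¹| • (Real.sqrt (1 - x * Real.cos (Real.arctan t)^2))⁻¹ = Jf 1 k t
  rw [Real.cos_sq_arctan]
  have h1t : (0:ℝ) < 1 + t^2 := by positivity
  have hfrac : 1 - x * (1/(1+t^2)) = (t^2+k^2)/(1+t^2) := by
    rw [hx]; field_simp; ring
  rw [hfrac, smul_eq_mul, abs_of_pos (by positivity)]
  rw [show ((t^2+k^2)/(1+t^2)) = (t^2+k^2) * (1+t^2)⁻¹ from div_eq_mul_inv _ _,
    Real.sqrt_mul (by positivity), Real.sqrt_inv]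
  unfold Jf
  rw [one_pow, show t^2+1 = 1+t^2 from by ring,
    Real.sqrt_mul (by positivity : (0:ℝ) ≤ 1+t^2)]
  have hs1 : (0:ℝ) < Real.sqrt (1+t^2) := Real.sqrt_pos.2 (by positivity)
  have hs2 : (0:ℝ) < Real.sqrt (t^2+k^2) := Real.sqrt_pos.2 (by positivity)
  have hss : (Real.sqrt (1+t^2))^2 = 1+t^2 := Real.sq_sqrt (by positivity)
  rw [← hss]
  field_simp
  linear_combination Real.sq_sqrt (sq_nonneg (Real.sqrt (1+t^2)))

lemma trig_series {x : ℝ} (h0 : 0 ≤ x) (h1 : x < 1) :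
    ∫ θ in Set.Ioo 0 (π/2), (Real.sqrt (1 - x * Real.cos θ^2))⁻¹
      = (π/2) * ∑' n, wc n^2 * x^n := by
  have hpt : ∀ θ : ℝ, (Real.sqrt (1 - x * Real.cos θ^2))⁻¹
      = ∑' n, wc n * x^n * Real.cos θ^(2*n) := by
    intro θ
    have hc2 : 0 ≤ Real.cos θ^2 := sq_nonneg _
    have hc2' : Real.cos θ^2 ≤ 1 := Real.cos_sq_le_one θ
    have hx0 : 0 ≤ x * Real.cos θ^2 := by positivity
    have hx1 : x * Real.cos θ^2 < 1 := by nlinarith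
    have := (hasSum_binomial hx0 hx1).tsum_eq
    rw [← this]
    congr 1
    ext n
    rw [mul_pow, pow_mul]
    ring
  rw [setIntegral_congr_fun measurableSet_Ioo (fun θ _ => hpt θ)]
  have hmeas : ∀ n : ℕ, AEStronglyMeasurable
      (fun θ : ℝ => wc n * x^n * Real.cos θ^(2*n))
      (volume.restrict (Set.Ioo 0 (π/2))) := by
    intro n
    exact ((continuous_const.mul ((Real.continuous_cos.pow (2*n)))).aestronglyMeasurable)
  have hsummable : Summable (fun n => wc n * x^n * (π/2)) :=
    (summable_wc_pow (by rwa [abs_of_nonneg h0])).mul_right _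
  have hnonneg : ∀ n, 0 ≤ wc n * x^n * (π/2) := by
    intro n
    have := wc_pos n
    have := Real.pi_pos
    positivity
  have hbound : ∑' n, (∫⁻ θ in Set.Ioo 0 (π/2), ‖wc n * x^n * Real.cos θ^(2*n)‖₊) ≠ ⊤ := by
    have hb : ∀ n, (∫⁻ θ in Set.Ioo 0 (π/2), ‖wc n * x^n * Real.cos θ^(2*n)‖₊)
        ≤ ENNReal.ofReal (wc n * x^n * (π/2)) := by
      intro n
      have hwc := wc_pos n
      calc (∫⁻ θ in Set.Ioo 0 (π/2), ‖wc n * x^n * Real.cos θ^(2*n)‖₊)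
          ≤ ∫⁻ _ in Set.Ioo 0 (π/2), ENNReal.ofReal (wc n * x^n) := by
            apply lintegral_mono
            intro θ
            simp only
            rw [← enorm_eq_nnnorm, Real.enorm_eq_ofReal_abs]
            apply ENNReal.ofReal_le_ofReal
            rw [abs_mul, abs_of_nonneg (by positivity : (0:ℝ) ≤ wc n * x^n)]
            calc wc n * x^n * |Real.cos θ^(2*n)| ≤ wc n * x^n * 1 := by
                  apply mul_le_mul_of_nonneg_left _ (by positivity)
                  rw [abs_pow, pow_mul]
                  apply pow_le_one₀ (by positivity)
                  rw [sq_abs]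
                  exact Real.cos_sq_le_one θ
              _ = wc n * x^n := mul_one _
        _ = ENNReal.ofReal (wc n * x^n) * volume (Set.Ioo (0:ℝ) (π/2)) :=
            setLIntegral_const _ _
        _ = ENNReal.ofReal (wc n * x^n * (π/2)) := by
            rw [Real.volume_Ioo, sub_zero, ← ENNReal.ofReal_mul (by positivity)]
    have hle : ∑' n, (∫⁻ θ in Set.Ioo 0 (π/2), ‖wc n * x^n * Real.cos θ^(2*n)‖₊)
        ≤ ENNReal.ofReal (∑' n, wc n * x^n * (π/2)) := by
      rw [ENNReal.ofReal_tsum_of_nonneg hnonneg hsummable]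
      exact ENNReal.tsum_le_tsum hb
    exact (lt_of_le_of_lt hle ENNReal.ofReal_lt_top).ne
  rw [integral_tsum hmeas hbound]
  have hterm : ∀ n : ℕ, (∫ θ in Set.Ioo 0 (π/2), wc n * x^n * Real.cos θ^(2*n))
      = (π/2) * (wc n^2 * x^n) := by
    intro n
    rw [← integral_Ioc_eq_integral_Ioo,
      ← intervalIntegral.integral_of_le (by positivity : (0:ℝ) ≤ π/2)]
    rw [intervalIntegral.integral_const_mul, integral_cos_even]
    ring
  calc ∑' n, (∫ θ in Set.Ioo 0 (π/2), wc n * x^n * Real.cos θ^(2*n))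
      = ∑' n, (π/2) * (wc n^2 * x^n) := by congr 1; ext n; exact hterm n
    _ = (π/2) * ∑' n, wc n^2 * x^n := tsum_mul_left

/-- Gauss hypergeometric function ₂F₁(a,b;c;z) as a power series sum. -/
noncomputable def hyp2F1 (a b c z : ℝ) : ℝ :=
  ∑' n : ℕ, (ascPochhammer ℝ n).eval a * (ascPochhammer ℝ n).eval b /
    ((ascPochhammer ℝ n).eval c * n.factorial) * z ^ n

theorem gauss_agm_hypergeometric (k : ℝ) (hk0 : 0 < k) (hk1 : k ≤ 1)
    (a b : ℕ → ℝ) (ha0 : a 0 = 1) (hb0 : b 0 = k)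
    (ha : ∀ n, a (n + 1) = (a n + b n) / 2)
    (hb : ∀ n, b (n + 1) = Real.sqrt (a n * b n))
    (M : ℝ)
    (haM : Filter.Tendsto a Filter.atTop (nhds M))
    (hbM : Filter.Tendsto b Filter.atTop (nhds M)) :
    M = 1 / hyp2F1 (1/2) (1/2) 1 (1 - k^2) := by
  have hx0 : 0 ≤ 1 - k^2 := by nlinarith
  have hx1 : 1 - k^2 < 1 := by nlinarith
  have hpos : ∀ n, 0 < a n ∧ 0 < b n := by
    intro n
    induction n with
    | zero => exact ⟨by rw [ha0]; norm_num, by rw [hb0]; exact hk0⟩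
    | succ n ih =>
      refine ⟨?_, ?_⟩
      · rw [ha n]; linarith [ih.1, ih.2]
      · rw [hb n]; exact Real.sqrt_pos.2 (mul_pos ih.1 ih.2)
  have hba : ∀ n, b n ≤ a n := by
    intro n
    cases n with
    | zero => rw [ha0, hb0]; exact hk1
    | succ m =>
      rw [ha m, hb m]
      have h1 := (hpos m).1
      have h2 := (hpos m).2
      have : a m * b m ≤ ((a m + b m)/2)^2 := by nlinarith [sq_nonneg (a m - b m)]
      calc Real.sqrt (a m * b m) ≤ Real.sqrt (((a m + b m)/2)^2) := Real.sqrt_le_sqrt this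
        _ = (a m + b m)/2 := Real.sqrt_sq (by linarith)
  have hbmono : Monotone b := by
    apply monotone_nat_of_le_succ
    intro n
    rw [hb n]
    have h2 := (hpos n).2
    calc b n = Real.sqrt (b n * b n) := (Real.sqrt_mul_self h2.le).symm
      _ ≤ Real.sqrt (a n * b n) :=
          Real.sqrt_le_sqrt (mul_le_mul_of_nonneg_right (hba n) h2.le)
  have hamono : Antitone a := by
    apply antitone_nat_of_succ_le
    intro n
    rw [ha n]
    linarith [hba n]
  have hbleM : ∀ n, b n ≤ M := fun n => hbmono.ge_of_tendsto hbM n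
  have hMlea : ∀ n, M ≤ a n := fun n => hamono.le_of_tendsto haM n
  have hM0 : 0 < M := lt_of_lt_of_le hk0 (hb0 ▸ hbleM 0)
  have hJ : ∀ n, Jint (a n) (b n) = Jint 1 k := by
    intro n
    induction n with
    | zero => rw [ha0, hb0]
    | succ n ih =>
      rw [ha n, hb n]
      exact (Jint_inv (hpos n).1 (hpos n).2).trans ih
  have hub : ∀ n, π/(2 * a n) ≤ Jint 1 k := by
    intro n
    rw [← hJ n]
    calc π/(2 * a n) = Jint (a n) (a n) := (Jint_diag (hpos n).1).symm
      _ ≤ Jint (a n) (b n) := Jint_mono_right (hpos n).1 (hpos n).2 (hba n)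
  have hlb : ∀ n, Jint 1 k ≤ π/(2 * b n) := by
    intro n
    rw [← hJ n]
    calc Jint (a n) (b n) = Jint (b n) (a n) := Jint_symm _ _
      _ ≤ Jint (b n) (b n) := Jint_mono_right (hpos n).2 (hpos n).2 (hba n)
      _ = π/(2 * b n) := Jint_diag (hpos n).2
  have htend_a : Filter.Tendsto (fun n => π/(2 * a n)) Filter.atTop (nhds (π/(2*M))) :=
    Filter.Tendsto.div tendsto_const_nhds (haM.const_mul 2) (by positivity)
  have htend_b : Filter.Tendsto (fun n => π/(2 * b n)) Filter.atTop (nhds (π/(2*M))) :=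
    Filter.Tendsto.div tendsto_const_nhds (hbM.const_mul 2) (by positivity)
  have h1 : π/(2*M) ≤ Jint 1 k := le_of_tendsto htend_a (Filter.Eventually.of_forall hub)
  have h2 : Jint 1 k ≤ π/(2*M) := ge_of_tendsto htend_b (Filter.Eventually.of_forall hlb)
  have hJval : Jint 1 k = π/(2*M) := le_antisymm h2 h1
  have hseries : Jint 1 k = (π/2) * ∑' n, wc n^2 * (1-k^2)^n :=
    (Jint_one_trig hk0).trans (trig_series hx0 hx1)
  have hsummable : Summable (fun n => wc n^2 * (1-k^2)^n) := by
    apply Summable.of_nonneg_of_le (fun n => by positivity) (fun n => ?_)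
      (summable_geometric_of_lt_one hx0 hx1)
    calc wc n^2 * (1-k^2)^n ≤ 1 * (1-k^2)^n := by
          apply mul_le_mul_of_nonneg_right _ (by positivity)
          nlinarith [wc_le_one n, wc_pos n]
      _ = (1-k^2)^n := one_mul _
  have hsum_pos : 0 < ∑' n, wc n^2 * (1-k^2)^n := by
    have h01 : (1:ℝ) = wc 0^2 * (1-k^2)^0 := by rw [wc_zero]; norm_num
    calc (0:ℝ) < 1 := one_pos
      _ = wc 0^2 * (1-k^2)^0 := h01
      _ ≤ ∑' n, wc n^2 * (1-k^2)^n :=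
          Summable.le_tsum hsummable 0 (fun i _ => by positivity)
  have hhyp : hyp2F1 (1/2) (1/2) 1 (1-k^2) = ∑' n, wc n^2 * (1-k^2)^n := by
    unfold hyp2F1
    congr 1
    ext n
    rw [poch_half, ascPochhammer_eval_one]
    have hf : (n.factorial : ℝ) ≠ 0 := Nat.cast_ne_zero.2 n.factorial_ne_zero
    field_simp
  rw [hhyp, eq_div_iff hsum_pos.ne']
  have hpi : π ≠ 0 := Real.pi_ne_zero
  rw [hseries] at hJval
  field_simp at hJval
  nlinarith [hJval, Real.pi_pos, hM0, hsum_pos]
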